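/- Let f : ℝ → ℝ be twice continuously differentiable, λ ∈ [0, 1] and r, s ∈ ℝ. Then f(λr + (1 − λ)s) = λ f(r) + (1 − λ) f(s) − E, where E = (r − s)² · ∫₀¹ (λ t · 1_{[0, 1−λ]}(t) + (1 − λ)(1 − t) · 1_{[1−λ, 1]}(t)) · f''((1 − t)r + t s) dt and 1_A denotes the indicator function of the set A. -/

import Mathlib

open MeasureTheory intervalIntegral Set

theorem key_aux (g g1 g2 : ℝ → ℝ)
    (hg : ∀ t, HasDerivAt g (g1 t) t) (hg1 : ∀ t, HasDerivAt g1 (g2 t) t)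
    (hg1c : Continuous g1) (hg2c : Continuous g2)
    {l : ℝ} (hl0 : 0 ≤ l) (hl1 : l ≤ 1) :
    (∫ t in (0:ℝ)..1,
      (l * t * Set.indicator (Set.Icc (0:ℝ) (1-l)) (fun _ => (1:ℝ)) t +
       (1-l)*(1-t) * Set.indicator (Set.Icc (1-l) (1:ℝ)) (fun _ => (1:ℝ)) t) * g2 t)
    = l * g 0 + (1-l) * g 1 - g (1-l) := by
  have ha0 : (0:ℝ) ≤ 1 - l := by linarith
  have ha1 : (1:ℝ) - l ≤ 1 := by linarith
  have hane : ∀ᵐ t : ℝ, t ≠ 1 - l := by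
    refine ae_iff.mpr ?_
    simp only [ne_eq, not_not, Set.setOf_eq_eq_singleton]
    exact Real.volume_singleton
  have heq1 : ∀ᵐ t : ℝ, t ∈ Set.uIoc (0:ℝ) (1-l) →
      (l * t * Set.indicator (Set.Icc (0:ℝ) (1-l)) (fun _ => (1:ℝ)) t +
       (1-l)*(1-t) * Set.indicator (Set.Icc (1-l) (1:ℝ)) (fun _ => (1:ℝ)) t) * g2 t
      = l * t * g2 t := by
    filter_upwards [hane] with t hta ht
    rw [Set.uIoc_of_le ha0] at ht
    have hlt : t < 1 - l := lt_of_le_of_ne ht.2 hta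
    rw [Set.indicator_of_mem (show t ∈ Set.Icc (0:ℝ) (1-l) from ⟨ht.1.le, ht.2⟩),
      Set.indicator_of_notMem (show t ∉ Set.Icc (1-l) (1:ℝ) from
        fun hmem => absurd hmem.1 (not_le.mpr hlt))]
    ring
  have heq2 : ∀ᵐ t : ℝ, t ∈ Set.uIoc (1-l) 1 →
      (l * t * Set.indicator (Set.Icc (0:ℝ) (1-l)) (fun _ => (1:ℝ)) t +
       (1-l)*(1-t) * Set.indicator (Set.Icc (1-l) (1:ℝ)) (fun _ => (1:ℝ)) t) * g2 t
      = (1-l)*(1-t) * g2 t := by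
    filter_upwards with t ht
    rw [Set.uIoc_of_le ha1] at ht
    rw [Set.indicator_of_notMem (show t ∉ Set.Icc (0:ℝ) (1-l) from
        fun hmem => absurd hmem.2 (not_le.mpr ht.1)),
      Set.indicator_of_mem (show t ∈ Set.Icc (1-l) (1:ℝ) from ⟨ht.1.le, ht.2⟩)]
    ring
  have hint1 : IntervalIntegrable (fun t =>
      (l * t * Set.indicator (Set.Icc (0:ℝ) (1-l)) (fun _ => (1:ℝ)) t +
       (1-l)*(1-t) * Set.indicator (Set.Icc (1-l) (1:ℝ)) (fun _ => (1:ℝ)) t) * g2 t)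
      volume 0 (1-l) :=
    (((continuous_const.mul continuous_id).mul hg2c).intervalIntegrable _ _).congr_ae
      ((ae_restrict_iff' measurableSet_uIoc).mpr (heq1.mono fun t h ht => (h ht).symm))
  have hint2 : IntervalIntegrable (fun t =>
      (l * t * Set.indicator (Set.Icc (0:ℝ) (1-l)) (fun _ => (1:ℝ)) t +
       (1-l)*(1-t) * Set.indicator (Set.Icc (1-l) (1:ℝ)) (fun _ => (1:ℝ)) t) * g2 t)
      volume (1-l) 1 :=
    (((continuous_const.mul (continuous_const.sub continuous_id)).mul
      hg2c).intervalIntegrable _ _).congr_ae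
      ((ae_restrict_iff' measurableSet_uIoc).mpr (heq2.mono fun t h ht => (h ht).symm))
  have hsplit := intervalIntegral.integral_add_adjacent_intervals hint1 hint2
  rw [← hsplit, intervalIntegral.integral_congr_ae heq1,
    intervalIntegral.integral_congr_ae heq2]
  have hI1 : ∫ t in (0:ℝ)..(1-l), l * t * g2 t
      = l*(1-l)*g1 (1-l) - l*0*g1 0 - ∫ t in (0:ℝ)..(1-l), l * g1 t := by
    have h := intervalIntegral.integral_mul_deriv_eq_deriv_mul
      (u := fun t => l * t) (u' := fun _ => l) (v := g1) (v' := g2)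
      (a := (0:ℝ)) (b := 1-l)
      (fun x _ => by simpa using (hasDerivAt_id x).const_mul l)
      (fun x _ => hg1 x) intervalIntegrable_const (hg2c.intervalIntegrable _ _)
    simpa using h
  have hI2 : ∫ t in (1-l)..1, (1-l)*(1-t) * g2 t
      = (1-l)*(1-1)*g1 1 - (1-l)*(1-(1-l))*g1 (1-l)
        - ∫ t in (1-l)..1, (-(1-l)) * g1 t := by
    have h := intervalIntegral.integral_mul_deriv_eq_deriv_mul
      (u := fun t => (1-l)*(1-t)) (u' := fun _ => -(1-l)) (v := g1) (v' := g2)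
      (a := (1-l)) (b := 1)
      (fun x _ => by simpa using ((hasDerivAt_id x).const_sub 1).const_mul (1-l))
      (fun x _ => hg1 x) intervalIntegrable_const (hg2c.intervalIntegrable _ _)
    simpa using h
  have hg0a : ∫ t in (0:ℝ)..(1-l), g1 t = g (1-l) - g 0 :=
    intervalIntegral.integral_eq_sub_of_hasDerivAt (fun x _ => hg x)
      (hg1c.intervalIntegrable _ _)
  have hga1 : ∫ t in (1-l)..1, g1 t = g 1 - g (1-l) :=
    intervalIntegral.integral_eq_sub_of_hasDerivAt (fun x _ => hg x)
      (hg1c.intervalIntegrable _ _)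
  rw [hI1, hI2, intervalIntegral.integral_const_mul,
    intervalIntegral.integral_const_mul, hg0a, hga1]
  ring

theorem jensen_error_term
    (f : ℝ → ℝ) (hf : ContDiff ℝ 2 f)
    (l : ℝ) (hl : l ∈ Set.Icc (0 : ℝ) 1) (r s : ℝ) :
    f (l * r + (1 - l) * s) =
      l * f r + (1 - l) * f s -
        (r - s) ^ 2 *
          ∫ t in (0 : ℝ)..1,
            (l * t * Set.indicator (Set.Icc (0 : ℝ) (1 - l)) (fun _ => (1 : ℝ)) t +
              (1 - l) * (1 - t) * Set.indicator (Set.Icc (1 - l) (1 : ℝ)) (fun _ => (1 : ℝ)) t) *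
              deriv (deriv f) ((1 - t) * r + t * s) := by
  obtain ⟨hl0, hl1⟩ := hl
  have hfd : Differentiable ℝ f := hf.differentiable (by norm_num)
  have hf1 : ContDiff ℝ 1 (deriv f) := by
    have h2 : (2 : WithTop ℕ∞) = 1 + 1 := by norm_num
    exact (contDiff_succ_iff_deriv.mp (h2 ▸ hf)).2.2
  have hfd' : Differentiable ℝ (deriv f) := hf1.differentiable (by norm_num)
  have hc1 : Continuous (deriv f) := hf.continuous_deriv (by norm_num)
  have hc2 : Continuous (deriv (deriv f)) := hf1.continuous_deriv le_rfl
  have hLder : ∀ t : ℝ, HasDerivAt (fun t : ℝ => (1 - t) * r + t * s) (s - r) t := by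
    intro t
    have h : HasDerivAt (fun t : ℝ => (1 - t) * r + t * s) (-1 * r + 1 * s) t := ((((hasDerivAt_id t).const_sub 1).mul_const r).add
      ((hasDerivAt_id t).mul_const s))
    convert h using 1
    ring
  have hLc : Continuous (fun t : ℝ => (1 - t) * r + t * s) :=
    ((continuous_const.sub continuous_id).mul continuous_const).add
      (continuous_id.mul continuous_const)
  have key := key_aux (fun t => f ((1 - t) * r + t * s))
    (fun t => deriv f ((1 - t) * r + t * s) * (s - r))
    (fun t => deriv (deriv f) ((1 - t) * r + t * s) * (s - r) * (s - r))
    (fun t => (hfd _).hasDerivAt.comp t (hLder t))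
    (fun t => (((hfd' _).hasDerivAt.comp t (hLder t)).mul_const (s - r)))
    ((hc1.comp hLc).mul continuous_const)
    (((hc2.comp hLc).mul continuous_const).mul continuous_const)
    hl0 hl1
  have hre : (r - s) ^ 2 *
      (∫ t in (0 : ℝ)..1,
        (l * t * Set.indicator (Set.Icc (0 : ℝ) (1 - l)) (fun _ => (1 : ℝ)) t +
          (1 - l) * (1 - t) * Set.indicator (Set.Icc (1 - l) (1 : ℝ)) (fun _ => (1 : ℝ)) t) *
          deriv (deriv f) ((1 - t) * r + t * s))
      = ∫ t in (0 : ℝ)..1,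
        (l * t * Set.indicator (Set.Icc (0 : ℝ) (1 - l)) (fun _ => (1 : ℝ)) t +
          (1 - l) * (1 - t) * Set.indicator (Set.Icc (1 - l) (1 : ℝ)) (fun _ => (1 : ℝ)) t) *
          (deriv (deriv f) ((1 - t) * r + t * s) * (s - r) * (s - r)) := by
    rw [← intervalIntegral.integral_const_mul]
    apply intervalIntegral.integral_congr
    intro t _
    ring
  rw [hre, key]
  have h0 : (1 - (0:ℝ)) * r + 0 * s = r := by ring
  have h1 : (1 - (1:ℝ)) * r + 1 * s = s := by ring
  have h2 : (1 - (1 - l)) * r + (1 - l) * s = l * r + (1 - l) * s := by ring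
  beta_reduce
  rw [h0, h1, h2]
  ring
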